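/- Let G be a unique product monoid, S a G-graded ring, and I a homogeneous two-sided ideal of S. Then I is a prime ideal if and only if for any homogeneous a, b ∈ S, if a S_g b ⊆ I for all g ∈ G then a ∈ I or b ∈ I. -/
import Mathlib

set_option linter.unusedSectionVars false

section UPMAux

variable {G : Type*} [Monoid G] [DecidableEq G]

/-- Auxiliary copy of the unique-product property, stated without the definition
below so it can be used in helper lemmas. -/
def IsUPMaux (G : Type*) [Monoid G] : Prop :=
  ∀ X Y : Finset G, X.Nonempty → Y.Nonempty →
    ∃ x ∈ X, ∃ y ∈ Y, ∀ x' ∈ X, ∀ y' ∈ Y, x' * y' = x * y → x' = x ∧ y' = y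

lemma IsUPMaux.left_cancel (hUP : IsUPMaux G) {c x y : G} (h : c * x = c * y) : x = y := by
  by_contra hne
  obtain ⟨x0, hx0, y0, hy0, hu⟩ := hUP {c} {x, y} ⟨c, by simp⟩ ⟨x, by simp⟩
  rw [Finset.mem_singleton] at hx0
  subst hx0
  have hcy : x0 * y0 = x0 * x := by
    rcases Finset.mem_insert.mp hy0 with h' | h'
    · rw [h']
    · rw [Finset.mem_singleton.mp h', ← h]
  have h1 : x = y0 := (hu x0 (by simp) x (by simp) hcy.symm).2
  have h2 : y = y0 := (hu x0 (by simp) y (by simp) (by rw [← h, ← hcy])).2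
  exact hne (h1.trans h2.symm)

lemma IsUPMaux.right_cancel (hUP : IsUPMaux G) {c x y : G} (h : x * c = y * c) : x = y := by
  by_contra hne
  obtain ⟨x0, hx0, y0, hy0, hu⟩ := hUP {x, y} {c} ⟨x, by simp⟩ ⟨c, by simp⟩
  rw [Finset.mem_singleton] at hy0
  subst hy0
  have hcy : x0 * y0 = x * y0 := by
    rcases Finset.mem_insert.mp hx0 with h' | h'
    · rw [h']
    · rw [Finset.mem_singleton.mp h', ← h]
  have h1 : x = x0 := (hu x (by simp) y0 (by simp) hcy.symm).1
  have h2 : y = x0 := (hu y (by simp) y0 (by simp) (by rw [← h, ← hcy])).1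
  exact hne (h1.trans h2.symm)

variable {S : Type*} [Ring S] (𝒮 : G → AddSubgroup S) (I : Set S)

lemma upm_Isum (hI0 : (0:S) ∈ I) (hIadd : ∀ a ∈ I, ∀ b ∈ I, a + b ∈ I)
    {ι : Type*} (T : Finset ι) (f : ι → S) (hf : ∀ i ∈ T, f i ∈ I) :
    (∑ i ∈ T, f i) ∈ I :=
  Finset.sum_induction f (· ∈ I) (fun a b ha hb => hIadd a ha b hb) hI0 hf

lemma upm_Icomp
    (hIhom : ∀ (k : ℕ) (c : Fin k → S) (d : Fin k → G), Function.Injective d →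
      (∀ i, c i ∈ 𝒮 (d i)) → (∑ i, c i) ∈ I → ∀ i, c i ∈ I)
    {ι : Type*} (T : Finset ι) (f : ι → S) (dg : ι → G)
    (hinj : Set.InjOn dg (T : Set ι))
    (hf : ∀ i ∈ T, f i ∈ 𝒮 (dg i)) (hsum : (∑ i ∈ T, f i) ∈ I) :
    ∀ i ∈ T, f i ∈ I := by
  classical
  set e := T.equivFin with he
  have hd : Function.Injective fun j : Fin T.card => dg ((e.symm j : ι)) := by
    intro j j' hjj
    have h1 : ((e.symm j : { x // x ∈ T }) : ι) = ((e.symm j' : { x // x ∈ T }) : ι) :=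
      hinj (e.symm j).2 (e.symm j').2 hjj
    exact e.symm.injective (Subtype.ext h1)
  have hsum' : (∑ j : Fin T.card, f ((e.symm j : { x // x ∈ T }) : ι)) ∈ I := by
    have h2 : (∑ j : Fin T.card, f ((e.symm j : { x // x ∈ T }) : ι)) = ∑ i ∈ T, f i := by
      rw [← Finset.sum_coe_sort T f]
      exact Equiv.sum_comp e.symm (fun x : { x // x ∈ T } => f (x : ι))
    rwa [h2]
  intro i hi
  have h3 := hIhom T.card (fun j => f ((e.symm j : { x // x ∈ T }) : ι))
    (fun j => dg ((e.symm j : { x // x ∈ T }) : ι))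
    hd (fun j => hf _ (e.symm j).2) hsum' (e ⟨i, hi⟩)
  simpa using h3

lemma upm_Ifiber (hI0 : (0:S) ∈ I)
    (hIhom : ∀ (k : ℕ) (c : Fin k → S) (d : Fin k → G), Function.Injective d →
      (∀ i, c i ∈ 𝒮 (d i)) → (∑ i, c i) ∈ I → ∀ i, c i ∈ I)
    {ι : Type*} [DecidableEq ι] (T : Finset ι)
    (c : ι → S) (deg : ι → G)
    (hc : ∀ p ∈ T, c p ∈ 𝒮 (deg p)) (hsum : (∑ p ∈ T, c p) ∈ I) (y : G) :
    (∑ p ∈ T.filter (fun p => deg p = y), c p) ∈ I := by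
  classical
  by_cases hy : y ∈ T.image deg
  · have key := upm_Icomp 𝒮 I hIhom (T.image deg)
      (fun z => ∑ p ∈ T.filter (fun p => deg p = z), c p) id
      (Set.injOn_id _)
      (fun z hz => AddSubgroup.sum_mem _ (fun p hp => by
        have h4 := (Finset.mem_filter.mp hp).2
        have h5 := hc p (Finset.mem_filter.mp hp).1
        rw [h4] at h5
        exact h5))
      (by
        rw [Finset.sum_fiberwise_of_maps_to (fun p hp => Finset.mem_image_of_mem deg hp) c]
        exact hsum)
    exact key y hy
  · have h6 : T.filter (fun p => deg p = y) = ∅ := by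
      apply Finset.filter_eq_empty_iff.mpr
      intro p hp hdeg
      exact hy (hdeg ▸ Finset.mem_image_of_mem deg hp)
    rw [h6, Finset.sum_empty]; exact hI0

/-- The key lemma: under the graded-primeness hypothesis `hRHS`, whenever `a` and `b`
admit finite homogeneous decompositions and `a S b ⊆ I`, then `a ∈ I` or `b ∈ I`.
The proof is by strong induction on the total number of homogeneous components. -/
lemma upm_mainlem (hUP : IsUPMaux G)
    (hmul : ∀ {g h : G} {a b : S}, a ∈ 𝒮 g → b ∈ 𝒮 h → a * b ∈ 𝒮 (g * h))
    (hI0 : (0 : S) ∈ I)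
    (hIadd : ∀ a ∈ I, ∀ b ∈ I, a + b ∈ I) (hIneg : ∀ a ∈ I, -a ∈ I)
    (hImul : ∀ a ∈ I, ∀ t : S, a * t ∈ I ∧ t * a ∈ I)
    (hIhom : ∀ (k : ℕ) (c : Fin k → S) (d : Fin k → G), Function.Injective d →
      (∀ i, c i ∈ 𝒮 (d i)) → (∑ i, c i) ∈ I → ∀ i, c i ∈ I)
    (hRHS : ∀ (ga : G) (a : S), a ∈ 𝒮 ga → ∀ (gb : G) (b : S), b ∈ 𝒮 gb →
      (∀ g : G, ∀ s ∈ 𝒮 g, a * s * b ∈ I) → a ∈ I ∨ b ∈ I) :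
    ∀ (n : ℕ) (A B : Finset G) (α β : G → S) (da db : G → G),
      A.card + B.card ≤ n →
      Set.InjOn da (A : Set G) → Set.InjOn db (B : Set G) →
      (∀ x ∈ A, α x ∈ 𝒮 (da x)) → (∀ h ∈ B, β h ∈ 𝒮 (db h)) →
      (∀ s : S, (∑ x ∈ A, α x) * s * (∑ h ∈ B, β h) ∈ I) →
      (∑ x ∈ A, α x) ∈ I ∨ (∑ h ∈ B, β h) ∈ I := by
  classical
  intro n
  induction n using Nat.strong_induction_on with
  | _ n ih =>
  intro A B α β da db hcard hinja hinjb hα hβ hprem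
  by_cases ha : (∑ x ∈ A, α x) ∈ I
  · exact Or.inl ha
  by_cases hb : (∑ h ∈ B, β h) ∈ I
  · exact Or.inr hb
  exfalso
  have hsub : ∀ u ∈ I, ∀ v ∈ I, u - v ∈ I := fun u hu v hv => by
    rw [sub_eq_add_neg]; exact hIadd u hu _ (hIneg v hv)
  have inner : ∀ (g : G) (m : ℕ) (U V : Finset G), U ⊆ A → V ⊆ B →
      U.card + V.card ≤ m →
      (∀ x ∈ A, ∀ h ∈ B, (x ∉ U ∨ h ∉ V) → ∀ s ∈ 𝒮 g, α x * s * β h ∈ I) →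
      ∀ x ∈ A, ∀ h ∈ B, ∀ s ∈ 𝒮 g, α x * s * β h ∈ I := by
    intro g m
    induction m with
    | zero =>
      intro U V hUA hVB hm known x hx h hh s hs
      have hU : U = ∅ := Finset.card_eq_zero.mp (by omega)
      exact known x hx h hh (Or.inl (by simp [hU])) s hs
    | succ m ihm =>
      intro U V hUA hVB hm known x hx h hh s hs
      rcases Finset.eq_empty_or_nonempty U with hUe | hU
      · exact known x hx h hh (Or.inl (by simp [hUe])) s hs
      rcases Finset.eq_empty_or_nonempty V with hVe | hV
      · exact known x hx h hh (Or.inr (by simp [hVe])) s hs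
      obtain ⟨u1, hu1, v1, hv1, huniq⟩ :=
        hUP (U.image fun z => da z * g) (V.image db) (hU.image _) (hV.image _)
      obtain ⟨x1, hx1U, hu1eq⟩ := Finset.mem_image.mp hu1
      obtain ⟨h1, hh1V, hv1eq⟩ := Finset.mem_image.mp hv1
      have hx1A : x1 ∈ A := hUA hx1U
      have hh1B : h1 ∈ B := hVB hh1V
      subst hu1eq
      subst hv1eq
      have hcorner : ∀ x' ∈ U, ∀ h' ∈ V,
          da x' * g * db h' = da x1 * g * db h1 → x' = x1 ∧ h' = h1 := by
        intro x' hx' h' hh' he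
        have h2 := huniq (da x' * g) (Finset.mem_image_of_mem _ hx')
          (db h') (Finset.mem_image_of_mem _ hh') he
        constructor
        · exact hinja (hUA hx') hx1A (hUP.right_cancel h2.1)
        · exact hinjb (hVB hh') hh1B h2.2
      have entry : ∀ s' ∈ 𝒮 g, α x1 * s' * β h1 ∈ I := by
        intro s' hs'
        have hprodmem : (∑ p ∈ A ×ˢ B, α p.1 * s' * β p.2) ∈ I := by
          have hre : (∑ x ∈ A, α x) * s' * (∑ h ∈ B, β h)
              = ∑ p ∈ A ×ˢ B, α p.1 * s' * β p.2 := by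
            rw [Finset.sum_product, Finset.sum_mul, Finset.sum_mul_sum]
          rw [← hre]; exact hprem s'
        have hfib := upm_Ifiber 𝒮 I hI0 hIhom (A ×ˢ B)
          (fun p => α p.1 * s' * β p.2) (fun p => da p.1 * g * db p.2)
          (fun p hp => by
            obtain ⟨hp1, hp2⟩ := Finset.mem_product.mp hp
            exact hmul (hmul (hα _ hp1) hs') (hβ _ hp2))
          hprodmem (da x1 * g * db h1)
        set F := (A ×ˢ B).filter (fun p => da p.1 * g * db p.2 = da x1 * g * db h1) with hF
        have hmemF : (x1, h1) ∈ F := by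
          rw [hF]
          exact Finset.mem_filter.mpr ⟨Finset.mem_product.mpr ⟨hx1A, hh1B⟩, rfl⟩
        have hrest : (∑ p ∈ F.erase (x1, h1), α p.1 * s' * β p.2) ∈ I := by
          apply upm_Isum I hI0 hIadd
          intro p hp
          have hpF := Finset.mem_of_mem_erase hp
          have hpd := (Finset.mem_filter.mp hpF).2
          obtain ⟨hp1, hp2⟩ := Finset.mem_product.mp (Finset.mem_filter.mp hpF).1
          have hor : p.1 ∉ U ∨ p.2 ∉ V := by
            by_contra hcon
            push_neg at hcon
            obtain ⟨e1, e2⟩ := hcorner p.1 hcon.1 p.2 hcon.2 hpd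
            exact Finset.ne_of_mem_erase hp (Prod.ext e1 e2)
          exact known p.1 hp1 p.2 hp2 hor s' hs'
        have heq : α x1 * s' * β h1
            = (∑ p ∈ F, α p.1 * s' * β p.2)
              - ∑ p ∈ F.erase (x1, h1), α p.1 * s' * β p.2 := by
          rw [eq_sub_iff_add_eq]
          exact Finset.add_sum_erase F (fun p => α p.1 * s' * β p.2) hmemF
        rw [heq]
        exact hsub _ hfib _ hrest
      have col : ∀ s' ∈ 𝒮 g, ∀ z ∈ A, α z * s' * β h1 ∈ I := by
        intro s' hs' z hz
        by_cases hzx : z = x1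
        · subst hzx; exact entry s' hs'
        have hwe : ((∑ x ∈ A, α x) - α x1) * s' * β h1
            = ∑ w ∈ A.erase x1, α w * s' * β h1 := by
          rw [← Finset.sum_erase_eq_sub hx1A, Finset.sum_mul, Finset.sum_mul]
        have hw : ∀ t : S,
            (∑ w ∈ A.erase x1, α w * s' * β h1) * t * (∑ h' ∈ B, β h') ∈ I := by
          intro t
          rw [← hwe]
          have hid : (((∑ x ∈ A, α x) - α x1) * s' * β h1) * t * (∑ h' ∈ B, β h')
              = (∑ x ∈ A, α x) * (s' * β h1 * t) * (∑ h' ∈ B, β h')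
                - (α x1 * s' * β h1) * (t * (∑ h' ∈ B, β h')) := by
            noncomm_ring
          rw [hid]
          exact hsub _ (hprem _) _ ((hImul _ (entry s' hs') _).1)
        have hinj1 : Set.InjOn (fun w => da w * g * db h1) ((A.erase x1 : Finset G) : Set G) := by
          intro w hw' w' hw'' he
          have e1 : da w * g = da w' * g := hUP.right_cancel he
          have e2 : da w = da w' := hUP.right_cancel e1
          exact hinja (Finset.mem_of_mem_erase (Finset.mem_coe.mp hw'))
            (Finset.mem_of_mem_erase (Finset.mem_coe.mp hw'')) e2
        have hmem1 : ∀ w ∈ A.erase x1, α w * s' * β h1 ∈ 𝒮 (da w * g * db h1) :=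
          fun w hw' => hmul (hmul (hα w (Finset.mem_of_mem_erase hw')) hs') (hβ h1 hh1B)
        have hn' : (A.erase x1).card + B.card < n := by
          have c1 := Finset.card_erase_of_mem hx1A
          have c2 : 0 < A.card := Finset.card_pos.mpr ⟨x1, hx1A⟩
          omega
        have hIH := ih ((A.erase x1).card + B.card) hn' (A.erase x1) B
          (fun w => α w * s' * β h1) β (fun w => da w * g * db h1) db le_rfl
          hinj1 hinjb hmem1 hβ hw
        have hwI : (∑ w ∈ A.erase x1, α w * s' * β h1) ∈ I := hIH.resolve_right hb
        exact upm_Icomp 𝒮 I hIhom (A.erase x1) (fun w => α w * s' * β h1)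
          (fun w => da w * g * db h1) hinj1 hmem1 hwI z (Finset.mem_erase.mpr ⟨hzx, hz⟩)
      have row : ∀ s' ∈ 𝒮 g, ∀ z ∈ B, α x1 * s' * β z ∈ I := by
        intro s' hs' z hz
        by_cases hzh : z = h1
        · subst hzh; exact entry s' hs'
        have hwe : α x1 * s' * ((∑ h' ∈ B, β h') - β h1)
            = ∑ w ∈ B.erase h1, α x1 * s' * β w := by
          rw [← Finset.sum_erase_eq_sub hh1B, Finset.mul_sum]
        have hw : ∀ t : S,
            (∑ x' ∈ A, α x') * t * (∑ w ∈ B.erase h1, α x1 * s' * β w) ∈ I := by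
          intro t
          rw [← hwe]
          have hid : (∑ x' ∈ A, α x') * t * (α x1 * s' * ((∑ h' ∈ B, β h') - β h1))
              = (∑ x' ∈ A, α x') * (t * α x1 * s') * (∑ h' ∈ B, β h')
                - ((∑ x' ∈ A, α x') * t) * (α x1 * s' * β h1) := by
            noncomm_ring
          rw [hid]
          exact hsub _ (hprem _) _ ((hImul _ (entry s' hs') _).2)
        have hinj1 : Set.InjOn (fun w => da x1 * g * db w) ((B.erase h1 : Finset G) : Set G) := by
          intro w hw' w' hw'' he
          have e1 : db w = db w' := hUP.left_cancel he
          exact hinjb (Finset.mem_of_mem_erase (Finset.mem_coe.mp hw'))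
            (Finset.mem_of_mem_erase (Finset.mem_coe.mp hw'')) e1
        have hmem1 : ∀ w ∈ B.erase h1, α x1 * s' * β w ∈ 𝒮 (da x1 * g * db w) :=
          fun w hw' => hmul (hmul (hα x1 hx1A) hs') (hβ w (Finset.mem_of_mem_erase hw'))
        have hn' : A.card + (B.erase h1).card < n := by
          have c1 := Finset.card_erase_of_mem hh1B
          have c2 : 0 < B.card := Finset.card_pos.mpr ⟨h1, hh1B⟩
          omega
        have hIH := ih (A.card + (B.erase h1).card) hn' A (B.erase h1)
          α (fun w => α x1 * s' * β w) da (fun w => da x1 * g * db w) le_rfl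
          hinja hinj1 hα hmem1 hw
        have hwI : (∑ w ∈ B.erase h1, α x1 * s' * β w) ∈ I := hIH.resolve_left ha
        exact upm_Icomp 𝒮 I hIhom (B.erase h1) (fun w => α x1 * s' * β w)
          (fun w => da x1 * g * db w) hinj1 hmem1 hwI z (Finset.mem_erase.mpr ⟨hzh, hz⟩)
      refine ihm (U.erase x1) (V.erase h1)
        ((Finset.erase_subset _ _).trans hUA) ((Finset.erase_subset _ _).trans hVB)
        ?_ ?_ x hx h hh s hs
      · have c1 := Finset.card_erase_of_mem hx1U
        have c2 := Finset.card_erase_of_mem hh1V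
        have p1 : 0 < U.card := Finset.card_pos.mpr ⟨x1, hx1U⟩
        have p2 : 0 < V.card := Finset.card_pos.mpr ⟨h1, hh1V⟩
        omega
      · intro x' hx' h' hh' hor s' hs'
        by_cases e1 : x' = x1
        · subst e1; exact row s' hs' h' hh'
        by_cases e2 : h' = h1
        · subst e2; exact col s' hs' x' hx'
        refine known x' hx' h' hh' ?_ s' hs'
        rcases hor with hh'' | hh''
        · exact Or.inl fun hxU => hh'' (Finset.mem_erase.mpr ⟨e1, hxU⟩)
        · exact Or.inr fun hhV => hh'' (Finset.mem_erase.mpr ⟨e2, hhV⟩)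
  have allent : ∀ x ∈ A, ∀ h ∈ B, ∀ g : G, ∀ s ∈ 𝒮 g, α x * s * β h ∈ I := by
    intro x hx h hh g s hs
    refine inner g (A.card + B.card) A B (subset_refl A) (subset_refl B) le_rfl ?_ x hx h hh s hs
    intro x' hx' h' hh' hor s' hs'
    rcases hor with hh'' | hh''
    · exact absurd hx' hh''
    · exact absurd hh' hh''
  have hex : ∃ x ∈ A, α x ∉ I := by
    by_contra hcon
    push_neg at hcon
    exact ha (upm_Isum I hI0 hIadd A α hcon)
  obtain ⟨x₀, hx₀, hax₀⟩ := hex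
  have hexb : ∃ h ∈ B, β h ∉ I := by
    by_contra hcon
    push_neg at hcon
    exact hb (upm_Isum I hI0 hIadd B β hcon)
  obtain ⟨h₀, hh₀, hbh₀⟩ := hexb
  rcases hRHS (da x₀) (α x₀) (hα _ hx₀) (db h₀) (β h₀) (hβ _ hh₀)
    (fun g s hs => allent _ hx₀ _ hh₀ g s hs) with hc | hc
  exacts [hax₀ hc, hbh₀ hc]

end UPMAux

/-- A unique product monoid. -/
def IsUPM (G : Type*) [Monoid G] : Prop :=
  ∀ X Y : Finset G, X.Nonempty → Y.Nonempty →
    ∃ x ∈ X, ∃ y ∈ Y, ∀ x' ∈ X, ∀ y' ∈ Y, x' * y' = x * y → x' = x ∧ y' = y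

/-- Let `G` be a unique product monoid, `S` a `G`-graded ring, and `I` a proper
homogeneous two-sided ideal of `S`.  Then `I` is prime iff for any homogeneous
`a, b ∈ S`, `a S_g b ⊆ I` for all `g ∈ G` implies `a ∈ I` or `b ∈ I`. -/
theorem stmt10 {G : Type*} [Monoid G] [DecidableEq G] (hUP : IsUPM G)
    {S : Type*} [Ring S] (𝒮 : G → AddSubgroup S)
    (hSdir : DirectSum.IsInternal 𝒮) (hone : (1 : S) ∈ 𝒮 1)
    (hmul : ∀ {g h : G} {a b : S}, a ∈ 𝒮 g → b ∈ 𝒮 h → a * b ∈ 𝒮 (g * h))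
    (I : Set S) (hI0 : (0 : S) ∈ I)
    (hIadd : ∀ a ∈ I, ∀ b ∈ I, a + b ∈ I) (hIneg : ∀ a ∈ I, -a ∈ I)
    (hImul : ∀ a ∈ I, ∀ t : S, a * t ∈ I ∧ t * a ∈ I)
    (hIhom : ∀ (k : ℕ) (c : Fin k → S) (d : Fin k → G), Function.Injective d →
      (∀ i, c i ∈ 𝒮 (d i)) → (∑ i, c i) ∈ I → ∀ i, c i ∈ I)
    (h1 : (1 : S) ∉ I) :
    (∀ a b : S, (∀ s : S, a * s * b ∈ I) → a ∈ I ∨ b ∈ I) ↔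
    (∀ (ga : G) (a : S), a ∈ 𝒮 ga → ∀ (gb : G) (b : S), b ∈ 𝒮 gb →
      (∀ g : G, ∀ s ∈ 𝒮 g, a * s * b ∈ I) → a ∈ I ∨ b ∈ I) := by
  classical
  have decomp : ∀ s : S, ∃ (T : Finset G) (σ : G → S),
      (∀ g ∈ T, σ g ∈ 𝒮 g) ∧ s = ∑ g ∈ T, σ g := by
    intro s
    obtain ⟨f, rfl⟩ := hSdir.surjective s
    refine ⟨DFinsupp.support f, fun g => (f g : S), fun g _ => (f g).2, ?_⟩
    conv_lhs => rw [← DirectSum.sum_support_of f]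
    rw [map_sum]
    exact Finset.sum_congr rfl fun g _ => DirectSum.coeAddMonoidHom_of 𝒮 g (f g)
  constructor
  · intro hP ga a ha gb b hb hcond
    apply hP
    intro s
    obtain ⟨T, σ, hσ, rfl⟩ := decomp s
    rw [Finset.mul_sum, Finset.sum_mul]
    exact upm_Isum I hI0 hIadd T _ (fun g hg => hcond g (σ g) (hσ g hg))
  · intro hRHS a b hab
    obtain ⟨Ta, σa, hσa, ha_eq⟩ := decomp a
    obtain ⟨Tb, σb, hσb, hb_eq⟩ := decomp b
    rw [ha_eq, hb_eq] at hab ⊢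
    exact upm_mainlem 𝒮 I hUP hmul hI0 hIadd hIneg hImul hIhom hRHS
      (Ta.card + Tb.card) Ta Tb σa σb id id le_rfl
      (Set.injOn_id _) (Set.injOn_id _)
      (fun x hx => hσa x hx) (fun h hh => hσb h hh) hab
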